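/- Let U = {P : F·vec(P) ≤ d₀} (F ∈ ℝ^{r×d}, d₀ ∈ ℝ^r) be a nonempty bounded polyhedron of payoff matrices and let G(1),…,G(k) be its (finitely many) extreme points. Then x = (x¹,…,x^N) with xⁱ ∈ ℝ^{aᵢ} is a robust optimization equilibrium of the finite robust game with uncertainty set U if and only if for every player i there exist z_i ∈ ℝ, φ_i ∈ ℝ and θ^i ∈ ℝ^k such that: z_i = φ_i; z_i − π_i(G(ℓ); x¹,…,x^N) ≤ 0 for every ℓ ∈ {1,…,k}; eᵀxⁱ = 1; xⁱ ≥ 0; eᵀθ^i = 1; θ^i ≥ 0; and Σ_{ℓ=1}^k θ^i_ℓ · π_i(G(ℓ); (x^{-i}, e^i_{j_i})) − φ_i ≤ 0 for every j_i ∈ {1,…,aᵢ}, where e^i_{j_i} ∈ S_{aᵢ} denotes the pure strategy putting probability 1 on action j_i and e is the all-ones vector. -/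

import Mathlib

open MeasureTheory Matrix

namespace DRG

/-- A payoff matrix: assigns to each player `i` and each joint action a real payoff. -/
abbrev Payoff (N : ℕ) (a : Fin N → ℕ) : Type := Fin N → (∀ k : Fin N, Fin (a k)) → ℝ

/-- A (not necessarily feasible) strategy profile. -/
abbrev Strategy (N : ℕ) (a : Fin N → ℕ) : Type := ∀ k : Fin N, Fin (a k) → ℝ

/-- Index type for the vectorization of a payoff matrix. -/
abbrev Idx (N : ℕ) (a : Fin N → ℕ) : Type := Fin N × (∀ k : Fin N, Fin (a k))

/-- Vectorization of a payoff matrix. -/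
def vecP {N : ℕ} {a : Fin N → ℕ} (P : Payoff N a) : Idx N a → ℝ := fun q => P q.1 q.2

/-- The mixed-strategy simplex `S_n`. -/
def simplex (n : ℕ) : Set (Fin n → ℝ) := {x | (∀ j, 0 ≤ x j) ∧ ∑ j, x j = 1}

/-- The set `S` of mixed strategy profiles. -/
def profiles (N : ℕ) (a : Fin N → ℕ) : Set (Strategy N a) :=
  {x | ∀ i, x i ∈ simplex (a i)}

/-- Expected payoff `π_i(P;x)`. -/
noncomputable def pay {N : ℕ} {a : Fin N → ℕ} (P : Payoff N a) (i : Fin N)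
    (x : Strategy N a) : ℝ :=
  ∑ j : (∀ k : Fin N, Fin (a k)), P i j * ∏ k, x k (j k)

/-- Nash equilibrium of the complete information game with payoff matrix `P`. -/
def IsNashEq {N : ℕ} {a : Fin N → ℕ} (P : Payoff N a) (x : Strategy N a) : Prop :=
  x ∈ profiles N a ∧ ∀ i : Fin N, ∀ u ∈ simplex (a i),
    pay P i (Function.update x i u) ≤ pay P i x

/-- Robust optimization equilibrium for uncertainty set `U`. -/
def IsRobustEq {N : ℕ} {a : Fin N → ℕ} (U : Set (Payoff N a)) (x : Strategy N a) : Prop :=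
  x ∈ profiles N a ∧ ∀ i : Fin N, ∀ u ∈ simplex (a i),
    (⨅ P : U, pay (P : Payoff N a) i (Function.update x i u)) ≤
      ⨅ P : U, pay (P : Payoff N a) i x

/-- Conditional value at risk of the loss `L` at level `ε` under `Q`. -/
noncomputable def cvar {V : Type*} [MeasurableSpace V] (Q : Measure V) (ε : ℝ)
    (L : V → ℝ) : ℝ :=
  ⨅ ζ : ℝ, (ζ + (1 / ε) * ∫ p, max (L p - ζ) 0 ∂Q)

/-- Distributionally robust optimization equilibrium for ambiguity set `𝓕` and
risk levels `ε`. -/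
def IsDREq {N : ℕ} {a : Fin N → ℕ} (𝓕 : Set (Measure (Payoff N a))) (ε : Fin N → ℝ)
    (x : Strategy N a) : Prop :=
  x ∈ profiles N a ∧ ∀ i : Fin N, ∀ u ∈ simplex (a i),
    (⨆ Q : 𝓕, cvar (Q : Measure (Payoff N a)) (ε i) (fun P => - pay P i x)) ≤
      ⨆ Q : 𝓕, cvar (Q : Measure (Payoff N a)) (ε i)
        (fun P => - pay P i (Function.update x i u))

/-- The ambiguity set `𝓕(W,h,m,s)`. -/
def ambiguity {N : ℕ} {a : Fin N → ℕ} (r : ℕ) (W : Matrix (Fin r) (Idx N a) ℝ)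
    (h : Fin r → ℝ) (m : Idx N a → ℝ) (s : ℝ) : Set (Measure (Payoff N a)) :=
  {Q | IsProbabilityMeasure Q ∧ Integrable (fun p => p) Q ∧
    Q {P | ∀ t, (W *ᵥ vecP P) t ≤ h t} = 1 ∧
    vecP (∫ p, p ∂Q) = m ∧
    (∫ p, ∑ q, |vecP p q - m q| ∂Q) ≤ s}

/-- The matrix `Y^i(x^{-i})` satisfying `vec(P)ᵀ Y^i(x^{-i}) uⁱ = π_i(P;(x^{-i},uⁱ))`. -/
noncomputable def Ymat {N : ℕ} {a : Fin N → ℕ} (i : Fin N) (x : Strategy N a) :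
    Matrix (Idx N a) (Fin (a i)) ℝ :=
  Matrix.of fun q l =>
    if q.1 = i ∧ q.2 i = l then ∏ r ∈ Finset.univ.erase i, x r (q.2 r) else 0


section Aux

variable {N k : ℕ} {a : Fin N → ℕ}

lemma isLinearMap_pay (i : Fin N) (x : Strategy N a) :
    IsLinearMap ℝ (fun P : Payoff N a => pay P i x) := by
  constructor
  · intro P Q; simp [pay, add_mul, Finset.sum_add_distrib]
  · intro c P; simp [pay, Finset.mul_sum, mul_assoc]

lemma continuous_pay (i : Fin N) (x : Strategy N a) :
    Continuous (fun P : Payoff N a => pay P i x) :=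
  (IsLinearMap.mk' _ (isLinearMap_pay i x)).continuous_of_finiteDimensional

lemma pay_update (P : Payoff N a) (i : Fin N) (x : Strategy N a) (u : Fin (a i) → ℝ) :
    pay P i (Function.update x i u) =
      ∑ j : (∀ k : Fin N, Fin (a k)), P i j * (u (j i) * ∏ k ∈ Finset.univ.erase i, x k (j k)) := by
  unfold pay
  refine Finset.sum_congr rfl fun j _ => ?_
  congr 1
  rw [← Finset.mul_prod_erase Finset.univ _ (Finset.mem_univ i)]
  congr 1
  · simp
  · exact Finset.prod_congr rfl fun k hk => by
      rw [Function.update_of_ne (Finset.ne_of_mem_erase hk)]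

lemma pay_update_eq_sum (P : Payoff N a) (i : Fin N) (x : Strategy N a) (u : Fin (a i) → ℝ) :
    pay P i (Function.update x i u) =
      ∑ l, u l * pay P i (Function.update x i (fun l' => if l' = l then 1 else 0)) := by
  simp only [pay_update, Finset.mul_sum]
  rw [Finset.sum_comm]
  refine Finset.sum_congr rfl fun j _ => ?_
  rw [show (∑ l, u l * (P i j * ((if j i = l then (1:ℝ) else 0) * ∏ k ∈ Finset.univ.erase i, x k (j k)))) = ∑ l, (if j i = l then u l * (P i j * ∏ k ∈ Finset.univ.erase i, x k (j k)) else 0) from Finset.sum_congr rfl fun l _ => by split <;> simp]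
  rw [Finset.sum_ite_eq]
  simp
  ring

variable {r : ℕ}

noncomputable def unvecL : (Idx N a → ℝ) →L[ℝ] Payoff N a :=
  LinearMap.toContinuousLinearMap
    { toFun := fun v i j => v (i, j)
      map_add' := by intros; rfl
      map_smul' := by intros; rfl }

lemma U_convex (F : Matrix (Fin r) (Idx N a) ℝ) (d₀ : Fin r → ℝ) :
    Convex ℝ {P : Payoff N a | ∀ t, (F *ᵥ vecP P) t ≤ d₀ t} := by
  intro P hP Q hQ b c hb hc hbc
  intro t
  have hP' := hP t
  have hQ' := hQ t
  have : vecP (b • P + c • Q) = b • vecP P + c • vecP Q := rfl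
  rw [this]
  simp only [mulVec, dotProduct] at *
  simp only [Pi.add_apply, Pi.smul_apply, smul_eq_mul]
  have : (∑ q, F t q * (b * vecP P q + c * vecP Q q)) =
      b * (∑ q, F t q * vecP P q) + c * (∑ q, F t q * vecP Q q) := by
    rw [Finset.mul_sum, Finset.mul_sum, ← Finset.sum_add_distrib]
    exact Finset.sum_congr rfl fun q _ => by ring
  rw [this]
  calc b * (∑ q, F t q * vecP P q) + c * (∑ q, F t q * vecP Q q)
      ≤ b * d₀ t + c * d₀ t := by gcongr
    _ = d₀ t := by rw [← add_mul, hbc, one_mul]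

lemma U_closed (F : Matrix (Fin r) (Idx N a) ℝ) (d₀ : Fin r → ℝ) :
    IsClosed {P : Payoff N a | ∀ t, (F *ᵥ vecP P) t ≤ d₀ t} := by
  have : {P : Payoff N a | ∀ t, (F *ᵥ vecP P) t ≤ d₀ t} =
      ⋂ t, {P : Payoff N a | (F *ᵥ vecP P) t ≤ d₀ t} := by
    ext P; simp
  rw [this]
  refine isClosed_iInter fun t => isClosed_le ?_ continuous_const
  simp only [mulVec, dotProduct]
  refine continuous_finset_sum _ fun q _ => ?_
  exact continuous_const.mul (((continuous_apply q.2).comp (continuous_apply q.1)))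

lemma U_compact (F : Matrix (Fin r) (Idx N a) ℝ) (d₀ : Fin r → ℝ)
    (hbdd : Bornology.IsBounded (vecP '' {P : Payoff N a | ∀ t, (F *ᵥ vecP P) t ≤ d₀ t})) :
    IsCompact {P : Payoff N a | ∀ t, (F *ᵥ vecP P) t ≤ d₀ t} := by
  set U := {P : Payoff N a | ∀ t, (F *ᵥ vecP P) t ≤ d₀ t}
  have hU : U = unvecL '' (vecP '' U) := by
    ext P
    constructor
    · intro hP; exact ⟨vecP P, ⟨P, hP, rfl⟩, rfl⟩
    · rintro ⟨v, ⟨Q, hQ, rfl⟩, rfl⟩; exact hQ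
  have hbdd' : Bornology.IsBounded U := by
    rw [hU]
    exact (unvecL.lipschitz.isBounded_image hbdd)
  exact Metric.isCompact_of_isClosed_isBounded (U_closed F d₀) hbdd'

/-- min over extreme points bounds pay below on U. -/
lemma inf'_le_pay {U : Set (Payoff N a)} (hUc : IsCompact U) (hUconv : Convex ℝ U)
    [Nonempty (Fin k)] {G : Fin k → Payoff N a}
    (hG : Set.range G = Set.extremePoints ℝ U) (i : Fin N) (y : Strategy N a)
    {P : Payoff N a} (hP : P ∈ U) :
    (Finset.univ.inf' Finset.univ_nonempty fun ℓ => pay (G ℓ) i y) ≤ pay P i y := by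
  set m := Finset.univ.inf' Finset.univ_nonempty fun ℓ => pay (G ℓ) i y with hm
  set C : Set (Payoff N a) := {Q | m ≤ pay Q i y}
  have hCconv : Convex ℝ C := convex_halfSpace_ge (isLinearMap_pay i y) m
  have hCclosed : IsClosed C := isClosed_le continuous_const (continuous_pay i y)
  have hsub : U ⊆ C := by
    have : closure (convexHull ℝ (Set.extremePoints ℝ U)) = U :=
      closure_convexHull_extremePoints hUc hUconv
    rw [← this, ← hG]
    refine closure_minimal (convexHull_min ?_ hCconv) hCclosed
    rintro _ ⟨ℓ, rfl⟩
    show m ≤ pay (G ℓ) i y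
    exact Finset.inf'_le _ (Finset.mem_univ ℓ)
  exact hsub hP

lemma iInf_eq_inf' {U : Set (Payoff N a)} (hUc : IsCompact U) (hUconv : Convex ℝ U)
    (hne : U.Nonempty) [Nonempty (Fin k)] {G : Fin k → Payoff N a}
    (hG : Set.range G = Set.extremePoints ℝ U) (i : Fin N) (y : Strategy N a) :
    (⨅ P : U, pay (P : Payoff N a) i y) =
      Finset.univ.inf' Finset.univ_nonempty fun ℓ => pay (G ℓ) i y := by
  haveI : Nonempty U := hne.to_subtype
  have hGU : ∀ ℓ, G ℓ ∈ U := fun ℓ => by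
    have : G ℓ ∈ Set.range G := ⟨ℓ, rfl⟩
    rw [hG] at this
    exact extremePoints_subset this
  have hbdd : BddBelow (Set.range fun P : U => pay (P : Payoff N a) i y) := by
    refine ⟨Finset.univ.inf' Finset.univ_nonempty fun ℓ => pay (G ℓ) i y, ?_⟩
    rintro _ ⟨P, rfl⟩
    exact inf'_le_pay hUc hUconv hG i y P.2
  refine le_antisymm ?_ ?_
  · obtain ⟨ℓ₀, -, hℓ₀⟩ := Finset.exists_mem_eq_inf' (Finset.univ_nonempty)
      (fun ℓ => pay (G ℓ) i y)
    rw [hℓ₀]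
    exact ciInf_le hbdd ⟨G ℓ₀, hGU ℓ₀⟩
  · exact le_ciInf fun P => inf'_le_pay hUc hUconv hG i y P.2

lemma minimax_aux {n k : ℕ} [Nonempty (Fin k)] (A : Fin k → Fin n → ℝ) (φ : ℝ)
    (h : ∀ u : Fin n → ℝ, (∀ j, 0 ≤ u j) → (∑ j, u j) = 1 →
      ∃ ℓ, (∑ j, u j * A ℓ j) ≤ φ) :
    ∃ θ : Fin k → ℝ, (∀ ℓ, 0 ≤ θ ℓ) ∧ (∑ ℓ, θ ℓ) = 1 ∧
      ∀ j, (∑ ℓ, θ ℓ * A ℓ j) ≤ φ := by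
  by_contra hcon
  push_neg at hcon
  set T : (Fin k → ℝ) →ₗ[ℝ] (Fin n → ℝ) :=
    { toFun := fun θ j => ∑ ℓ, θ ℓ * A ℓ j
      map_add' := by
        intro θ η; funext j
        simp [add_mul, Finset.sum_add_distrib]
      map_smul' := by
        intro c θ; funext j
        simp [Finset.mul_sum, mul_assoc] } with hT
  set C : Set (Fin n → ℝ) := T '' stdSimplex ℝ (Fin k) with hC
  set D : Set (Fin n → ℝ) := {v | ∀ j, v j ≤ φ} with hD
  have hCcomp : IsCompact C :=
    (isCompact_stdSimplex ℝ (Fin k)).image T.continuous_of_finiteDimensional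
  have hCconv : Convex ℝ C := (convex_stdSimplex ℝ _).linear_image T
  have hDconv : Convex ℝ D := by
    intro v hv w hw b c hb hc hbc j
    have : (b • v + c • w) j = b * v j + c * w j := rfl
    rw [this]
    calc b * v j + c * w j ≤ b * φ + c * φ := by gcongr; exacts [hv j, hw j]
      _ = φ := by rw [← add_mul, hbc, one_mul]
  have hDclosed : IsClosed D := by
    have : D = ⋂ j, {v : Fin n → ℝ | v j ≤ φ} := by ext v; simp [hD]
    rw [this]
    exact isClosed_iInter fun j => isClosed_le (continuous_apply j) continuous_const
  have hdisj : Disjoint D C := by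
    rw [Set.disjoint_left]
    rintro v hvD ⟨θ, hθ, rfl⟩
    obtain ⟨j, hj⟩ := hcon θ hθ.1 hθ.2
    exact absurd (hvD j) (not_le.2 hj)
  obtain ⟨f, u, v, hfD, huv, hfC⟩ :=
    geometric_hahn_banach_closed_compact hDconv hDclosed hCconv hCcomp hdisj
  set w : Fin n → ℝ := fun j => f (Pi.single j 1) with hw
  have hrep : ∀ y : Fin n → ℝ, f y = ∑ j, y j * w j := by
    intro y
    have hy : y = ∑ j, y j • (Pi.single j (1:ℝ) : Fin n → ℝ) := by
      funext j'
      simp [Pi.single_apply, Finset.sum_apply, Finset.sum_ite_eq']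
    conv_lhs => rw [hy]
    rw [map_sum]
    exact Finset.sum_congr rfl fun j _ => by rw [_root_.map_smul]; rfl
  set c0 : Fin n → ℝ := fun _ => φ with hc0
  have hc0D : c0 ∈ D := fun j => le_refl φ
  have hfc0 : f c0 = φ * ∑ j, w j := by
    rw [hrep, Finset.mul_sum]
  have hc0u : f c0 < u := hfD c0 hc0D
  have hwpos : ∀ j, 0 ≤ w j := by
    intro j
    by_contra hwj
    push_neg at hwj
    set M : ℝ := (u - f c0) / (-w j) with hM
    have hM0 : 0 ≤ M := le_of_lt (div_pos (by linarith) (by linarith))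
    have hpD : (c0 - M • (Pi.single j (1:ℝ) : Fin n → ℝ)) ∈ D := by
      intro j'
      have hval : (c0 - M • (Pi.single j (1:ℝ) : Fin n → ℝ)) j' =
          φ - M * (Pi.single j (1:ℝ) : Fin n → ℝ) j' := rfl
      rw [hval]
      have : (0:ℝ) ≤ M * (Pi.single j (1:ℝ) : Fin n → ℝ) j' := by
        apply mul_nonneg hM0
        rcases eq_or_ne j' j with rfl | hne
        · simp
        · simp [Pi.single_apply, hne]
      linarith
    have := hfD _ hpD
    rw [map_sub, _root_.map_smul] at this
    have hfp : f c0 - M * w j = u := by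
      have : M * (-w j) = u - f c0 := by
        rw [hM, div_mul_cancel₀ _ (by linarith : -w j ≠ 0)]
      have h2 : M * w j = -(u - f c0) := by linarith [this]
      linarith
    simp only [smul_eq_mul] at this
    rw [show f (Pi.single j 1) = w j from rfl] at this
    linarith
  have hsum_nonneg : 0 ≤ ∑ j, w j := Finset.sum_nonneg fun j _ => hwpos j
  have hkpos : (0:ℝ) < k := by
    have : k ≠ 0 := by
      rintro rfl
      exact (Fin.pos_iff_nonempty.2 ‹Nonempty (Fin 0)›).ne rfl
    positivity
  have hθ0 : (fun _ : Fin k => (k:ℝ)⁻¹) ∈ stdSimplex ℝ (Fin k) := by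
    constructor
    · intro ℓ; positivity
    · simp [Finset.sum_const]
      field_simp
  have hc1 : T (fun _ => (k:ℝ)⁻¹) ∈ C := ⟨_, hθ0, rfl⟩
  have hsum_pos : 0 < ∑ j, w j := by
    rcases lt_or_eq_of_le hsum_nonneg with h' | h'
    · exact h'
    · exfalso
      have hz : ∀ j ∈ Finset.univ, w j = 0 :=
        (Finset.sum_eq_zero_iff_of_nonneg fun j _ => hwpos j).1 h'.symm
      have hf0 : ∀ y, f y = 0 := by
        intro y
        rw [hrep]
        exact Finset.sum_eq_zero fun j hj => by rw [hz j hj, mul_zero]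
      have h1 : f c0 < u := hc0u
      have h2 : v < f (T fun _ => (k:ℝ)⁻¹) := hfC _ hc1
      rw [hf0] at h1 h2
      linarith
  set S := ∑ j, w j with hS
  obtain ⟨ℓ, hℓ⟩ := h (fun j => w j / S) (fun j => div_nonneg (hwpos j) hsum_pos.le)
    (by rw [← Finset.sum_div]; field_simp; exact hS.symm)
  have hδ : (fun ℓ' => if ℓ' = ℓ then (1:ℝ) else 0) ∈ stdSimplex ℝ (Fin k) := by
    constructor
    · intro ℓ'; dsimp only; split <;> norm_num
    · simp
  have hAℓC : (fun j => A ℓ j) ∈ C := by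
    refine ⟨_, hδ, ?_⟩
    funext j
    simp [hT]
  have hfAℓ : φ * S < ∑ j, A ℓ j * w j := by
    have := hfC _ hAℓC
    rw [hrep] at this
    rw [← hfc0] at *
    linarith [hc0u, huv]
  have : (∑ j, (w j / S) * A ℓ j) = (∑ j, A ℓ j * w j) / S := by
    rw [Finset.sum_div]
    exact Finset.sum_congr rfl fun j _ => by ring
  rw [this] at hℓ
  have : (∑ j, A ℓ j * w j) ≤ φ * S := by
    rw [div_le_iff₀ hsum_pos] at hℓ
    linarith [hℓ]
  linarith

end Aux

/-- **Computation of equilibria in robust finite games (Aghassi–Bertsimas).**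
Let `U = {P : F·vec(P) ≤ d₀}` be a nonempty bounded polyhedron of payoff
matrices with extreme points `G(1),…,G(k)`.  Then `x` is a robust optimization
equilibrium of the finite robust game with uncertainty set `U` iff for every
player `i` there exist `z_i, φ_i ∈ ℝ` and `θ^i ∈ ℝ^k` satisfying the
multilinear system below, where `e^i_{j}` denotes the pure strategy putting
probability 1 on action `j`. -/
theorem robustEq_iff_extremeSystem {N r k : ℕ} (hN : 1 ≤ N)
    (a : Fin N → ℕ) (ha : ∀ i, 1 ≤ a i)
    (F : Matrix (Fin r) (Idx N a) ℝ) (d₀ : Fin r → ℝ)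
    (hne : {P : Payoff N a | ∀ t, (F *ᵥ vecP P) t ≤ d₀ t}.Nonempty)
    (hbdd : Bornology.IsBounded
      (vecP '' {P : Payoff N a | ∀ t, (F *ᵥ vecP P) t ≤ d₀ t}))
    (G : Fin k → Payoff N a)
    (hG : Set.range G =
      Set.extremePoints ℝ {P : Payoff N a | ∀ t, (F *ᵥ vecP P) t ≤ d₀ t})
    (x : Strategy N a) :
    IsRobustEq {P : Payoff N a | ∀ t, (F *ᵥ vecP P) t ≤ d₀ t} x ↔
      ∀ i : Fin N, ∃ (z φ : ℝ) (θ : Fin k → ℝ),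
        z = φ ∧
        (∀ ℓ : Fin k, z - pay (G ℓ) i x ≤ 0) ∧
        (∑ l, x i l) = 1 ∧
        (∀ l, 0 ≤ x i l) ∧
        (∑ ℓ, θ ℓ) = 1 ∧
        (∀ ℓ, 0 ≤ θ ℓ) ∧
        (∀ j : Fin (a i),
          (∑ ℓ, θ ℓ *
            pay (G ℓ) i (Function.update x i (fun l => if l = j then 1 else 0)))
            - φ ≤ 0) := by
  classical
  set U := {P : Payoff N a | ∀ t, (F *ᵥ vecP P) t ≤ d₀ t} with hU
  have hUconv : Convex ℝ U := U_convex F d₀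
  have hUcomp : IsCompact U := U_compact F d₀ hbdd
  have hext : (Set.extremePoints ℝ U).Nonempty := hUcomp.extremePoints_nonempty hne
  haveI hkne : Nonempty (Fin k) := by
    obtain ⟨P, hP⟩ := hext
    rw [← hG] at hP
    obtain ⟨ℓ, -⟩ := hP
    exact ⟨ℓ⟩
  have hinf : ∀ (i : Fin N) (y : Strategy N a),
      (⨅ P : U, pay (P : Payoff N a) i y) =
        Finset.univ.inf' Finset.univ_nonempty fun ℓ => pay (G ℓ) i y :=
    fun i y => iInf_eq_inf' hUcomp hUconv hne hG i y
  constructor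
  · rintro ⟨hxprof, hxeq⟩ i
    set φ : ℝ := Finset.univ.inf' Finset.univ_nonempty fun ℓ => pay (G ℓ) i x with hφ
    have hA : ∀ u : Fin (a i) → ℝ, (∀ j, 0 ≤ u j) → (∑ j, u j) = 1 →
        ∃ ℓ, (∑ j, u j *
          pay (G ℓ) i (Function.update x i (fun l => if l = j then 1 else 0))) ≤ φ := by
      intro u h1 h2
      have hu : u ∈ simplex (a i) := ⟨h1, h2⟩
      have := hxeq i u hu
      rw [hinf i _, hinf i x] at this
      obtain ⟨ℓ₀, -, hℓ₀⟩ := Finset.exists_mem_eq_inf' (Finset.univ_nonempty)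
        (fun ℓ => pay (G ℓ) i (Function.update x i u))
      refine ⟨ℓ₀, ?_⟩
      have hpay : pay (G ℓ₀) i (Function.update x i u) =
          ∑ j, u j * pay (G ℓ₀) i (Function.update x i (fun l => if l = j then 1 else 0)) :=
        pay_update_eq_sum (G ℓ₀) i x u
      rw [← hpay, ← hℓ₀]
      exact this
    obtain ⟨θ, hθ0, hθ1, hθφ⟩ := minimax_aux
      (fun ℓ j => pay (G ℓ) i (Function.update x i (fun l => if l = j then 1 else 0))) φ hA
    refine ⟨φ, φ, θ, rfl, ?_, (hxprof i).2, (hxprof i).1, hθ1, hθ0, ?_⟩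
    · intro ℓ
      have : φ ≤ pay (G ℓ) i x := Finset.inf'_le _ (Finset.mem_univ ℓ)
      linarith
    · intro j
      have := hθφ j
      linarith
  · intro hsys
    have hxprof : x ∈ profiles N a := by
      intro i
      obtain ⟨z, φ, θ, -, -, h3, h4, -⟩ := hsys i
      exact ⟨h4, h3⟩
    refine ⟨hxprof, fun i u hu => ?_⟩
    obtain ⟨z, φ, θ, hzφ, hz, h3, h4, hθ1, hθ0, hθφ⟩ := hsys i
    rw [hinf i _, hinf i x]
    have step1 : (Finset.univ.inf' Finset.univ_nonempty fun ℓ =>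
        pay (G ℓ) i (Function.update x i u)) ≤
        ∑ ℓ, θ ℓ * pay (G ℓ) i (Function.update x i u) := by
      calc (Finset.univ.inf' Finset.univ_nonempty fun ℓ =>
              pay (G ℓ) i (Function.update x i u))
          = ∑ ℓ, θ ℓ * (Finset.univ.inf' Finset.univ_nonempty fun ℓ =>
              pay (G ℓ) i (Function.update x i u)) := by
            rw [← Finset.sum_mul, hθ1, one_mul]
        _ ≤ ∑ ℓ, θ ℓ * pay (G ℓ) i (Function.update x i u) := by
            refine Finset.sum_le_sum fun ℓ _ => ?_
            exact mul_le_mul_of_nonneg_left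
              (Finset.inf'_le _ (Finset.mem_univ ℓ)) (hθ0 ℓ)
    have step2 : (∑ ℓ, θ ℓ * pay (G ℓ) i (Function.update x i u)) =
        ∑ j, u j * (∑ ℓ, θ ℓ *
          pay (G ℓ) i (Function.update x i (fun l => if l = j then 1 else 0))) := by
      have : ∀ ℓ, θ ℓ * pay (G ℓ) i (Function.update x i u) =
          ∑ j, u j * (θ ℓ *
            pay (G ℓ) i (Function.update x i (fun l => if l = j then 1 else 0))) := by
        intro ℓ
        rw [pay_update_eq_sum (G ℓ) i x u, Finset.mul_sum]
        exact Finset.sum_congr rfl fun j _ => by ring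
      rw [Finset.sum_congr rfl fun ℓ _ => this ℓ, Finset.sum_comm]
      exact Finset.sum_congr rfl fun j _ => by rw [Finset.mul_sum]
    have step3 : (∑ j, u j * (∑ ℓ, θ ℓ *
        pay (G ℓ) i (Function.update x i (fun l => if l = j then 1 else 0)))) ≤ φ := by
      calc (∑ j, u j * (∑ ℓ, θ ℓ *
              pay (G ℓ) i (Function.update x i (fun l => if l = j then 1 else 0))))
          ≤ ∑ j, u j * φ := by
            refine Finset.sum_le_sum fun j _ => ?_
            exact mul_le_mul_of_nonneg_left (by linarith [hθφ j]) (hu.1 j)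
        _ = φ := by rw [← Finset.sum_mul, hu.2, one_mul]
    have step4 : φ ≤ Finset.univ.inf' Finset.univ_nonempty fun ℓ => pay (G ℓ) i x := by
      refine Finset.le_inf' _ _ fun ℓ _ => ?_
      have := hz ℓ
      linarith [hzφ ▸ this]
    calc (Finset.univ.inf' Finset.univ_nonempty fun ℓ =>
            pay (G ℓ) i (Function.update x i u))
        ≤ ∑ ℓ, θ ℓ * pay (G ℓ) i (Function.update x i u) := step1
      _ = _ := step2
      _ ≤ φ := step3
      _ ≤ _ := step4


end DRG
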